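/- The polynomial p₂ = z³ − xyz² + (x² + y² − 1)z − xy is irreducible in the polynomial ring ℂ[x,y,z]. -/
import Mathlib

open MvPolynomial Polynomial

noncomputable section P2Aux

/-- Evaluation at the point `(1, 0)`. -/
private def φ2 : MvPolynomial (Fin 2) ℂ →+* ℂ := MvPolynomial.eval ![1, 0]

/-- The maximal ideal of polynomials vanishing at `(1, 0)`. -/
private def P2 : Ideal (MvPolynomial (Fin 2) ℂ) := RingHom.ker φ2

private lemma mem_P2_iff (f : MvPolynomial (Fin 2) ℂ) :
    f ∈ P2 ↔ MvPolynomial.eval ![1, 0] f = 0 := Iff.rfl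

private lemma sq_vanish (f : MvPolynomial (Fin 2) ℂ) (hf : f ∈ P2 ^ 2) :
    MvPolynomial.eval ![1, 0] (pderiv 1 f) = 0 := by
  rw [pow_two] at hf
  refine Submodule.mul_induction_on hf ?_ ?_
  · intro m hm n hn
    rw [mem_P2_iff] at hm hn
    simp [pderiv_mul, hm, hn]
  · intro a b ha hb
    simp [ha, hb]

private lemma not_mem_sq : (X 1 * X 0 : MvPolynomial (Fin 2) ℂ) ∉ P2 ^ 2 := by
  intro h
  have := sq_vanish _ h
  simp [pderiv_mul] at this

/-- Moving the variable `z` to the front. -/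
private def e3 : MvPolynomial (Fin 3) ℂ ≃ₐ[ℂ] Polynomial (MvPolynomial (Fin 2) ℂ) :=
  (renameEquiv ℂ (Equiv.swap 0 2)).trans (finSuccEquiv ℂ 2)

private lemma e3_apply :
    e3 ((X 2) ^ 3 - X 0 * X 1 * (X 2) ^ 2 +
      ((X 0) ^ 2 + (X 1) ^ 2 - 1) * X 2 - X 0 * X 1) =
    Polynomial.X ^ 3 - Polynomial.C (X 1 * X 0) * Polynomial.X ^ 2 +
      Polynomial.C ((X 1) ^ 2 + (X 0) ^ 2 - 1) * Polynomial.X - Polynomial.C (X 1 * X 0) := by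
  have h0 : e3 (X 0) = Polynomial.C (X 1) := by
    show (finSuccEquiv ℂ 2) ((renameEquiv ℂ (Equiv.swap 0 2)) (X 0)) = _
    rw [renameEquiv_apply, rename_X, Equiv.swap_apply_left,
      show (2 : Fin 3) = (1 : Fin 2).succ from rfl, finSuccEquiv_X_succ]
  have h1 : e3 (X 1) = Polynomial.C (X 0) := by
    show (finSuccEquiv ℂ 2) ((renameEquiv ℂ (Equiv.swap 0 2)) (X 1)) = _
    rw [renameEquiv_apply, rename_X, Equiv.swap_apply_of_ne_of_ne (by decide) (by decide),
      show (1 : Fin 3) = (0 : Fin 2).succ from rfl, finSuccEquiv_X_succ]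
  have h2 : e3 (X 2) = Polynomial.X := by
    show (finSuccEquiv ℂ 2) ((renameEquiv ℂ (Equiv.swap 0 2)) (X 2)) = _
    rw [renameEquiv_apply, rename_X, Equiv.swap_apply_right, finSuccEquiv_X_zero]
  simp only [map_sub, map_add, map_mul, map_pow, map_one, h0, h1, h2]

private lemma q_irreducible :
    Irreducible (Polynomial.X ^ 3 - Polynomial.C (X 1 * X 0) * Polynomial.X ^ 2 +
      Polynomial.C ((X 1) ^ 2 + (X 0) ^ 2 - 1) * Polynomial.X - Polynomial.C (X 1 * X 0) :
      Polynomial (MvPolynomial (Fin 2) ℂ)) := by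
  set a : MvPolynomial (Fin 2) ℂ := X 1 * X 0 with ha
  set b : MvPolynomial (Fin 2) ℂ := (X 1) ^ 2 + (X 0) ^ 2 - 1 with hb
  set q : Polynomial (MvPolynomial (Fin 2) ℂ) :=
    Polynomial.X ^ 3 - Polynomial.C a * Polynomial.X ^ 2 +
      Polynomial.C b * Polynomial.X - Polynomial.C a with hq
  have hmonic : q.Monic := by
    rw [hq]
    monicity!
  have hdeg : q.degree = 3 := by
    rw [hq]
    compute_degree!
  have hc0 : q.coeff 0 = -a := by simp [hq, Polynomial.coeff_X_pow]
  have hc1 : q.coeff 1 = b := by simp [hq, Polynomial.coeff_X_pow]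
  have hc2 : q.coeff 2 = -a := by simp [hq, Polynomial.coeff_X_pow]
  refine irreducible_of_eisenstein_criterion (RingHom.ker_isPrime φ2) ?_ ?_ ?_ ?_
    hmonic.isPrimitive
  · rw [hmonic.leadingCoeff, RingHom.mem_ker]
    simp [φ2]
  · intro n hn
    rw [hdeg] at hn
    have hn3 : n < 3 := by exact_mod_cast hn
    interval_cases n
    · rw [hc0, RingHom.mem_ker]
      simp [φ2, ha]
    · rw [hc1, RingHom.mem_ker]
      simp [φ2, hb]
    · rw [hc2, RingHom.mem_ker]
      simp [φ2, ha]
  · rw [hdeg]; norm_num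
  · rw [hc0]
    intro h
    exact not_mem_sq ((Ideal.neg_mem_iff _).mp h)

end P2Aux

/-- The polynomial `p₂ = z³ − xyz² + (x² + y² − 1)z − xy` is irreducible in `ℂ[x,y,z]`. -/
theorem p2_irreducible :
    Irreducible ((X 2) ^ 3 - X 0 * X 1 * (X 2) ^ 2 +
      ((X 0) ^ 2 + (X 1) ^ 2 - 1) * X 2 - X 0 * X 1 :
      MvPolynomial (Fin 3) ℂ) := by
  rw [← MulEquiv.irreducible_iff e3.toMulEquiv]
  show Irreducible (e3 _)
  rw [e3_apply]
  exact q_irreducible
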